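/- Let ξ_1, ξ_2, … be mutually independent random variables on a probability space, each exponentially distributed with rate 1, and set X_l := ξ_1 + ⋯ + ξ_l. Then for every natural number l and every real x > 0: e^{−x} · x^l / l! ≤ P(X_l ≤ x) ≤ (1 + e^{x} · x/(l+1)) · e^{−x} · x^l / l!. -/

import Mathlib

open MeasureTheory ProbabilityTheory Finset Real

namespace ExpTailAux

/-- density of the sum of `l+1` i.i.d. rate-1 exponentials -/
noncomputable def ρ (l : ℕ) (t : ℝ) : ℝ :=
  if 0 ≤ t then t ^ l * Real.exp (-t) / l.factorial else 0

lemma ρ_nonneg (l : ℕ) (t : ℝ) : 0 ≤ ρ l t := by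
  unfold ρ; split_ifs <;> positivity

lemma ρ_meas (l : ℕ) : Measurable (ρ l) := by
  unfold ρ
  apply Measurable.ite measurableSet_Ici _ measurable_const
  fun_prop

lemma ρ_eq_gammaPDFReal (l : ℕ) (t : ℝ) :
    ρ l t = gammaPDFReal ((l : ℝ) + 1) 1 t := by
  unfold ρ gammaPDFReal
  split_ifs with h
  · rw [one_rpow, Real.Gamma_nat_eq_factorial,
      show ((l : ℝ) + 1) - 1 = (l : ℝ) by ring, Real.rpow_natCast]
    rw [one_mul]
    ring
  · rfl

lemma withDensity_eq (l : ℕ) :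
    (volume : Measure ℝ).withDensity (fun t => ENNReal.ofReal (ρ l t))
      = gammaMeasure ((l : ℝ) + 1) 1 := by
  unfold gammaMeasure
  congr 1
  funext t
  rw [gammaPDF, ρ_eq_gammaPDFReal]

instance isProb_withDensity (l : ℕ) :
    IsProbabilityMeasure
      ((volume : Measure ℝ).withDensity (fun t => ENNReal.ofReal (ρ l t))) := by
  rw [withDensity_eq]
  exact isProbabilityMeasure_gammaMeasure (by positivity) one_pos

/-- CDF of the exponential measure as an `ofReal`. -/
lemma expMeasure_Iic (y : ℝ) :
    expMeasure 1 (Set.Iic y)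
      = ENNReal.ofReal (if 0 ≤ y then 1 - Real.exp (-y) else 0) := by
  have h1 : expMeasure 1 (Set.Iic y) = ∫⁻ t in Set.Iic y, exponentialPDF 1 t := by
    rw [expMeasure, gammaMeasure, withDensity_apply _ measurableSet_Iic]
    rfl
  rw [h1, lintegral_exponentialPDF_eq_antiDeriv one_pos]
  simp [one_mul]

/-- Lebesgue integral of `ofReal ∘ ρ k` over `Iic x` as a real integral. -/
lemma lint_Iic (k : ℕ) (x : ℝ) :
    ∫⁻ t in Set.Iic x, ENNReal.ofReal (ρ k t)
      = ENNReal.ofReal (∫ t in Set.Icc (0:ℝ) x, t ^ k * Real.exp (-t) / k.factorial) := by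
  have hcont : Continuous fun t : ℝ => t ^ k * Real.exp (-t) / (k.factorial : ℝ) := by
    fun_prop
  have hind : (Set.Iic x).indicator (fun t => ENNReal.ofReal (ρ k t))
      = fun t => ENNReal.ofReal
          ((Set.Icc (0:ℝ) x).indicator
            (fun t => t ^ k * Real.exp (-t) / k.factorial) t) := by
    funext t
    by_cases ht : t ∈ Set.Icc (0:ℝ) x
    · rw [Set.indicator_of_mem ht, Set.indicator_of_mem (Set.mem_Iic.2 ht.2)]
      rw [ρ, if_pos ht.1]
    · rw [Set.indicator_of_notMem ht]
      rcases le_or_gt t x with h | h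
      · rw [Set.indicator_of_mem (Set.mem_Iic.2 h)]
        have ht0 : ¬ (0 ≤ t) := fun h0 => ht ⟨h0, h⟩
        rw [ρ, if_neg ht0, ENNReal.ofReal_zero]
      · rw [Set.indicator_of_notMem (by simpa using h)]
        simp
  rw [← lintegral_indicator measurableSet_Iic _, hind,
    ← ofReal_integral_eq_lintegral_ofReal]
  · rw [integral_indicator measurableSet_Icc]
  · rw [integrable_indicator_iff measurableSet_Icc]
    exact hcont.integrableOn_Icc
  · filter_upwards with t
    apply Set.indicator_nonneg
    intro s hs
    have : (0:ℝ) ≤ s := hs.1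
    positivity

/-- the key real integral identity behind the convolution step -/
lemma conv_integral (m : ℕ) (x : ℝ) :
    ∫ s in Set.Icc (0:ℝ) x,
        (s ^ m * Real.exp (-s) / m.factorial - s ^ m * Real.exp (-x) / m.factorial)
      = ∫ t in Set.Icc (0:ℝ) x, t ^ (m+1) * Real.exp (-t) / (m+1).factorial := by
  rcases lt_or_ge x 0 with hx | hx
  · rw [Set.Icc_eq_empty (by linarith)]
    simp
  have hfac : ((m.factorial : ℝ)) ≠ 0 := by positivity
  have hfac1 : (((m+1).factorial : ℝ)) ≠ 0 := by positivity
  -- switch to interval integrals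
  rw [MeasureTheory.integral_Icc_eq_integral_Ioc, MeasureTheory.integral_Icc_eq_integral_Ioc,
    ← intervalIntegral.integral_of_le hx, ← intervalIntegral.integral_of_le hx]
  -- FTC argument
  set A : ℝ → ℝ := fun t =>
    Real.exp (-x) * t ^ (m+1) / (m+1).factorial - t ^ (m+1) * Real.exp (-t) / (m+1).factorial
    with hA
  have hderiv : ∀ t ∈ Set.uIcc (0:ℝ) x, HasDerivAt A
      (t ^ (m+1) * Real.exp (-t) / (m+1).factorial
        - (t ^ m * Real.exp (-t) / m.factorial - t ^ m * Real.exp (-x) / m.factorial)) t := by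
    intro t _
    have he : HasDerivAt (fun t : ℝ => Real.exp (-t)) (-Real.exp (-t)) t := by
      simpa using (hasDerivAt_neg t).exp
    have h1 : HasDerivAt (fun t : ℝ => t ^ (m+1)) ((m+1) * t ^ m) t := by
      simpa using hasDerivAt_pow (m+1) t
    have h2 : HasDerivAt (fun t : ℝ => t ^ (m+1) * Real.exp (-t))
        ((m+1) * t ^ m * Real.exp (-t) + t ^ (m+1) * (-Real.exp (-t))) t := h1.mul he
    have h3 := ((h1.const_mul (Real.exp (-x))).div_const ((m+1).factorial : ℝ)).sub
      (h2.div_const ((m+1).factorial : ℝ))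
    refine h3.congr_deriv ?_
    have : ((m+1).factorial : ℝ) = (m+1) * m.factorial := by
      rw [Nat.factorial_succ]; push_cast; ring
    rw [this]
    field_simp
    ring
  have hcont1 : Continuous fun t : ℝ => t ^ (m+1) * Real.exp (-t) / ((m+1).factorial : ℝ) := by
    fun_prop
  have hcont2 : Continuous fun t : ℝ =>
      t ^ m * Real.exp (-t) / (m.factorial : ℝ) - t ^ m * Real.exp (-x) / (m.factorial : ℝ) := by
    fun_prop
  have hFTC := intervalIntegral.integral_eq_sub_of_hasDerivAt hderiv
    ((hcont1.sub hcont2).intervalIntegrable 0 x)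
  rw [intervalIntegral.integral_sub (hcont1.intervalIntegrable 0 x)
    (hcont2.intervalIntegrable 0 x)] at hFTC
  have hA0 : A x - A 0 = 0 := by
    simp only [hA]
    rw [zero_pow (Nat.succ_ne_zero m)]
    ring
  rw [hA0] at hFTC
  linarith

/-- The distribution of the sum of the first `m+1` variables. -/
lemma map_sum_eq {Ω : Type*} [MeasurableSpace Ω] (μ : Measure Ω) [IsProbabilityMeasure μ]
    (ξ : ℕ → Ω → ℝ) (hmeas : ∀ i, Measurable (ξ i))
    (hindep : iIndepFun ξ μ)
    (hexp : ∀ i, μ.map (ξ i) = expMeasure 1) (m : ℕ) :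
    μ.map (fun ω => ∑ i ∈ Finset.range (m + 1), ξ i ω)
      = (volume : Measure ℝ).withDensity (fun t => ENNReal.ofReal (ρ m t)) := by
  induction m with
  | zero =>
    have h0 : (fun ω => ∑ i ∈ Finset.range 1, ξ i ω) = ξ 0 := by
      funext ω; simp
    rw [h0, hexp 0, expMeasure, withDensity_eq]
    norm_num
  | succ m ih =>
    set S : Ω → ℝ := fun ω => ∑ i ∈ Finset.range (m+1), ξ i ω with hS
    have hSmeas : Measurable S := by
      apply Finset.measurable_sum
      exact fun i _ => hmeas i
    have hSum : IndepFun S (ξ (m+1)) μ := by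
      have h := hindep.indepFun_sum_range_succ hmeas (m+1)
      have h1 : (∑ j ∈ Finset.range (m+1), ξ j) = S := by
        funext ω; simp [hS, Finset.sum_apply]
      rwa [h1] at h
    have hpair : μ.map (fun ω => (S ω, ξ (m+1) ω)) = (μ.map S).prod (μ.map (ξ (m+1))) :=
      (indepFun_iff_map_prod_eq_prod_map_map hSmeas.aemeasurable
        (hmeas _).aemeasurable).mp hSum
    have hcomp : (fun ω => ∑ i ∈ Finset.range (m + 1 + 1), ξ i ω)
        = (fun p : ℝ × ℝ => p.1 + p.2) ∘ (fun ω => (S ω, ξ (m+1) ω)) := by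
      funext ω
      simp [Finset.sum_range_succ, hS, Function.comp]
    have hadd : Measurable fun p : ℝ × ℝ => p.1 + p.2 := measurable_fst.add measurable_snd
    rw [hcomp, ← Measure.map_map hadd (hSmeas.prodMk (hmeas _)), hpair, ih, hexp]
    -- now a pure statement about measures on ℝ
    have hprob : IsProbabilityMeasure (expMeasure (1:ℝ)) := isProbabilityMeasure_expMeasure one_pos
    haveI : IsProbabilityMeasure
        ((((volume : Measure ℝ).withDensity (fun t => ENNReal.ofReal (ρ m t))).prod
          (expMeasure 1)).map (fun p : ℝ × ℝ => p.1 + p.2)) :=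
      Measure.isProbabilityMeasure_map hadd.aemeasurable
    refine MeasureTheory.Measure.ext_of_Iic _ _ (fun x => ?_)
    rw [Measure.map_apply hadd measurableSet_Iic]
    have hset : (fun p : ℝ × ℝ => p.1 + p.2) ⁻¹' Set.Iic x
        = {p : ℝ × ℝ | p.1 + p.2 ≤ x} := rfl
    have hmset : MeasurableSet {p : ℝ × ℝ | p.1 + p.2 ≤ x} :=
      measurableSet_le hadd measurable_const
    rw [hset, Measure.prod_apply hmset]
    have hsec : ∀ s : ℝ, (Prod.mk s ⁻¹' {p : ℝ × ℝ | p.1 + p.2 ≤ x}) = Set.Iic (x - s) := by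
      intro s; ext t
      simp only [Set.mem_preimage, Set.mem_setOf_eq, Set.mem_Iic]
      constructor <;> intro <;> linarith
    have hlint : ∫⁻ s, expMeasure 1 (Prod.mk s ⁻¹' {p : ℝ × ℝ | p.1 + p.2 ≤ x})
          ∂((volume : Measure ℝ).withDensity (fun t => ENNReal.ofReal (ρ m t)))
        = ∫⁻ s, ENNReal.ofReal (if 0 ≤ x - s then 1 - Real.exp (-(x - s)) else 0)
          ∂((volume : Measure ℝ).withDensity (fun t => ENNReal.ofReal (ρ m t))) := by
      apply lintegral_congr
      intro s
      rw [hsec s, expMeasure_Iic]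
    rw [hlint]
    have hgmeas : Measurable fun s : ℝ =>
        ENNReal.ofReal (if 0 ≤ x - s then 1 - Real.exp (-(x - s)) else 0) := by
      apply ENNReal.measurable_ofReal.comp
      apply Measurable.ite _ (by fun_prop) measurable_const
      exact measurableSet_le measurable_const (by fun_prop)
    rw [lintegral_withDensity_eq_lintegral_mul _
      (ρ_meas m).ennreal_ofReal hgmeas]
    simp only [Pi.mul_apply]
    -- identify integrand with ofReal of an indicator
    have hpt : (fun s => ENNReal.ofReal (ρ m s)
          * ENNReal.ofReal (if 0 ≤ x - s then 1 - Real.exp (-(x - s)) else 0))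
        = fun s => ENNReal.ofReal
            ((Set.Icc (0:ℝ) x).indicator
              (fun s => s ^ m * Real.exp (-s) / m.factorial
                - s ^ m * Real.exp (-x) / m.factorial) s) := by
      funext s
      rw [← ENNReal.ofReal_mul (ρ_nonneg m s)]
      congr 1
      by_cases hs : s ∈ Set.Icc (0:ℝ) x
      · rw [Set.indicator_of_mem hs, ρ, if_pos hs.1, if_pos (by linarith [hs.2])]
        have key : Real.exp (-s) * Real.exp (s - x) = Real.exp (-x) := by
          rw [← Real.exp_add]; congr 1; ring
        have key2 : Real.exp (-(x - s)) = Real.exp (s - x) := by congr 1; ring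
        rw [key2]
        field_simp
        linear_combination (-(s:ℝ)^m) * key
      · rw [Set.indicator_of_notMem hs]
        rcases le_or_gt 0 s with h0 | h0
        · have hxs : ¬ (0 ≤ x - s) := by
            intro h; exact hs ⟨h0, by linarith⟩
          rw [if_neg hxs, mul_zero]
        · rw [ρ, if_neg (not_le.2 h0), zero_mul]
    rw [hpt]
    -- RHS
    rw [withDensity_apply _ measurableSet_Iic, lint_Iic, ← conv_integral m x]
    rw [← ofReal_integral_eq_lintegral_ofReal]
    · rw [integral_indicator measurableSet_Icc]
    · rw [integrable_indicator_iff measurableSet_Icc]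
      exact (by fun_prop :
        Continuous fun s : ℝ => s ^ m * Real.exp (-s) / (m.factorial:ℝ)
          - s ^ m * Real.exp (-x) / (m.factorial:ℝ)).integrableOn_Icc
    · filter_upwards with s
      apply Set.indicator_nonneg
      intro s hs
      have h0 : (0:ℝ) ≤ s := hs.1
      have h1 : Real.exp (-x) ≤ Real.exp (-s) := Real.exp_le_exp.2 (by linarith [hs.2])
      have h2 : (0:ℝ) ≤ s ^ m := by positivity
      have h3 : (0:ℝ) < (m.factorial : ℝ) := by positivity
      rw [sub_nonneg]
      gcongr

end ExpTailAux

/-- **Tail estimates for sums of i.i.d. standard exponentials**: if `ξ 0, ξ 1, …` are mutually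
independent rate-1 exponential random variables and `X_l := ξ 0 + ⋯ + ξ (l-1)` is the sum of
the first `l` of them, then for every `l` and every real `x > 0`,
`e^{−x} x^l / l! ≤ P(X_l ≤ x) ≤ (1 + e^x · x/(l+1)) · e^{−x} x^l / l!`. -/
theorem exponential_sum_tail_estimate
    {Ω : Type*} [MeasurableSpace Ω] (μ : Measure Ω) [IsProbabilityMeasure μ]
    (ξ : ℕ → Ω → ℝ) (hmeas : ∀ i, Measurable (ξ i))
    (hindep : iIndepFun ξ μ)
    (hexp : ∀ i, μ.map (ξ i) = expMeasure 1)
    (l : ℕ) (x : ℝ) (hx : 0 < x) :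
    Real.exp (-x) * x ^ l / (l.factorial : ℝ) ≤
        (μ {ω | ∑ i ∈ Finset.range l, ξ i ω ≤ x}).toReal ∧
      (μ {ω | ∑ i ∈ Finset.range l, ξ i ω ≤ x}).toReal ≤
        (1 + Real.exp x * x / (l + 1)) * (Real.exp (-x) * x ^ l / (l.factorial : ℝ)) := by
  cases l with
  | zero =>
    have hset : {ω : Ω | ∑ i ∈ Finset.range 0, ξ i ω ≤ x} = Set.univ := by
      ext ω; simp [hx.le]
    rw [hset, measure_univ, ENNReal.toReal_one]
    have h1 : Real.exp (-x) ≤ 1 := by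
      rw [← Real.exp_zero]; exact Real.exp_le_exp.2 (by linarith)
    have hmul : Real.exp x * Real.exp (-x) = 1 := by rw [← Real.exp_add]; simp
    have h2 : 1 - x ≤ Real.exp (-x) := by
      have := Real.add_one_le_exp (-x); linarith
    constructor
    · simp only [pow_zero, Nat.factorial_zero, Nat.cast_one, mul_one, div_one]
      exact h1
    · simp only [pow_zero, Nat.factorial_zero, Nat.cast_one, mul_one, div_one,
        Nat.cast_zero, zero_add, div_one]
      nlinarith
  | succ k =>
    have hmap := ExpTailAux.map_sum_eq μ ξ hmeas hindep hexp k
    have hSmeas : Measurable fun ω => ∑ i ∈ Finset.range (k+1), ξ i ω :=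
      Finset.measurable_sum _ fun i _ => hmeas i
    have hP : μ {ω | ∑ i ∈ Finset.range (k+1), ξ i ω ≤ x}
        = ENNReal.ofReal (∫ t in Set.Icc (0:ℝ) x, t ^ k * Real.exp (-t) / k.factorial) := by
      rw [show {ω | ∑ i ∈ Finset.range (k+1), ξ i ω ≤ x}
          = (fun ω => ∑ i ∈ Finset.range (k+1), ξ i ω) ⁻¹' Set.Iic x from rfl,
        ← Measure.map_apply hSmeas measurableSet_Iic, hmap,
        withDensity_apply _ measurableSet_Iic, ExpTailAux.lint_Iic]
    have hint_nonneg : 0 ≤ ∫ t in Set.Icc (0:ℝ) x, t ^ k * Real.exp (-t) / k.factorial :=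
      setIntegral_nonneg measurableSet_Icc fun t ht =>
        div_nonneg (mul_nonneg (pow_nonneg ht.1 k) (Real.exp_pos _).le) (Nat.cast_nonneg _)
    rw [hP, ENNReal.toReal_ofReal hint_nonneg]
    have hI : (∫ t in Set.Icc (0:ℝ) x, t ^ k * Real.exp (-t) / k.factorial)
        = ∫ t in (0:ℝ)..x, t ^ k * Real.exp (-t) / k.factorial := by
      rw [MeasureTheory.integral_Icc_eq_integral_Ioc, ← intervalIntegral.integral_of_le hx.le]
    have hc : Continuous fun t : ℝ => t ^ k * Real.exp (-t) / (k.factorial : ℝ) := by fun_prop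
    have hkf : ((k.factorial : ℝ)) ≠ 0 := by positivity
    have hk1 : ((k : ℝ) + 1) ≠ 0 := by positivity
    have hk2 : ((k : ℝ) + 2) ≠ 0 := by positivity
    have hf1 : (((k+1).factorial : ℝ)) = ((k:ℝ)+1) * k.factorial := by
      rw [Nat.factorial_succ]; push_cast; ring
    constructor
    · -- lower bound
      have low : (∫ t in (0:ℝ)..x, Real.exp (-x) * t ^ k / k.factorial)
          ≤ ∫ t in (0:ℝ)..x, t ^ k * Real.exp (-t) / k.factorial := by
        apply intervalIntegral.integral_mono_on hx.le
          ((by fun_prop : Continuous fun t : ℝ =>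
            Real.exp (-x) * t ^ k / (k.factorial : ℝ)).intervalIntegrable 0 x)
          (hc.intervalIntegrable 0 x)
        intro t ht
        have h1 : Real.exp (-x) ≤ Real.exp (-t) := Real.exp_le_exp.2 (by linarith [ht.2])
        rw [mul_comm (Real.exp (-x))]
        have h0 : (0:ℝ) ≤ t := ht.1
        gcongr
      have hval : (∫ t in (0:ℝ)..x, Real.exp (-x) * t ^ k / k.factorial)
          = Real.exp (-x) * x ^ (k+1) / ((k+1).factorial : ℝ) := by
        have he : (fun t : ℝ => Real.exp (-x) * t ^ k / (k.factorial : ℝ))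
            = fun t => (Real.exp (-x) / k.factorial) * t ^ k := by funext t; ring
        rw [he, intervalIntegral.integral_const_mul, integral_pow,
          zero_pow (Nat.succ_ne_zero k), hf1]
        field_simp
        ring
      rw [hI]
      calc Real.exp (-x) * x ^ (k+1) / (((k+1).factorial : ℕ) : ℝ)
          = ∫ t in (0:ℝ)..x, Real.exp (-x) * t ^ k / k.factorial := hval.symm
        _ ≤ _ := low
    · -- upper bound
      have up : (∫ t in (0:ℝ)..x, t ^ k * Real.exp (-t) / k.factorial)
          ≤ ∫ t in (0:ℝ)..x, (Real.exp (-x) + (x - t)) * t ^ k / k.factorial := by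
        apply intervalIntegral.integral_mono_on hx.le (hc.intervalIntegrable 0 x)
          ((by fun_prop : Continuous fun t : ℝ =>
            (Real.exp (-x) + (x - t)) * t ^ k / (k.factorial : ℝ)).intervalIntegrable 0 x)
        intro t ht
        have h0 : (0:ℝ) ≤ t := ht.1
        have h2 : Real.exp (-t) ≤ 1 := by
          rw [← Real.exp_zero]; exact Real.exp_le_exp.2 (by linarith)
        have h3 : Real.exp (-t) * Real.exp (t - x) = Real.exp (-x) := by
          rw [← Real.exp_add]; congr 1; ring
        have e1 : Real.exp (-t) * ((t - x) + 1) ≤ Real.exp (-x) := by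
          rw [← h3]
          exact mul_le_mul_of_nonneg_left (Real.add_one_le_exp (t - x)) (Real.exp_pos (-t)).le
        have e2 : (0:ℝ) ≤ (1 - Real.exp (-t)) * (x - t) :=
          mul_nonneg (by linarith) (by linarith [ht.2])
        have hexp_le : Real.exp (-t) ≤ Real.exp (-x) + (x - t) := by nlinarith [e1, e2]
        rw [mul_comm (Real.exp (-x) + (x - t))]
        gcongr
      have hval2 : (∫ t in (0:ℝ)..x, (Real.exp (-x) + (x - t)) * t ^ k / k.factorial)
          = (Real.exp (-x) + x) / k.factorial * (x ^ (k+1) / ((k:ℝ)+1))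
            - (1 / k.factorial) * (x ^ (k+2) / ((k:ℝ)+2)) := by
        have he : (fun t : ℝ => (Real.exp (-x) + (x - t)) * t ^ k / (k.factorial : ℝ))
            = fun t => ((Real.exp (-x) + x) / k.factorial) * t ^ k
                - (1 / k.factorial) * t ^ (k+1) := by
          funext t; rw [pow_succ]; ring
        rw [he, intervalIntegral.integral_sub
          ((by fun_prop : Continuous fun t : ℝ =>
            ((Real.exp (-x) + x) / k.factorial) * t ^ k).intervalIntegrable 0 x)
          ((by fun_prop : Continuous fun t : ℝ =>
            (1 / (k.factorial : ℝ)) * t ^ (k+1)).intervalIntegrable 0 x),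
          intervalIntegral.integral_const_mul, intervalIntegral.integral_const_mul,
          integral_pow, integral_pow, zero_pow (Nat.succ_ne_zero k),
          zero_pow (Nat.succ_ne_zero (k+1))]
        push_cast
        ring
      have key : (1 + Real.exp x * x / (((k+1 : ℕ) : ℝ) + 1))
            * (Real.exp (-x) * x ^ (k+1) / (((k+1).factorial : ℕ) : ℝ))
          = (Real.exp (-x) + x) / k.factorial * (x ^ (k+1) / ((k:ℝ)+1))
            - (1 / k.factorial) * (x ^ (k+2) / ((k:ℝ)+2)) := by
        have hx1 : Real.exp x * Real.exp (-x) = 1 := by rw [← Real.exp_add]; simp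
        have expand : (1 + Real.exp x * x / (((k+1 : ℕ) : ℝ) + 1))
              * (Real.exp (-x) * x ^ (k+1) / (((k+1).factorial : ℕ) : ℝ))
            = Real.exp (-x) * x ^ (k+1) / (((k+1).factorial : ℕ) : ℝ)
              + (Real.exp x * Real.exp (-x))
                * (x / (((k+1 : ℕ) : ℝ) + 1) * (x ^ (k+1) / (((k+1).factorial : ℕ) : ℝ))) := by
          ring
        rw [expand, hx1, one_mul, hf1]
        push_cast
        rw [show ((k:ℝ) + 1 + 1) = (k:ℝ) + 2 by ring]
        field_simp
        ring
      rw [hI, key]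
      calc (∫ t in (0:ℝ)..x, t ^ k * Real.exp (-t) / k.factorial) ≤ _ := up
        _ = _ := hval2
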